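/- For k = 4 and w₁ ∈ (0, 1/2), the binary KL divergence D_KL(p₀₀ ‖ 1/6) = (1-p₀₀)ln((6/5)(1-p₀₀)) + p₀₀ ln(6p₀₀) is a lower bound for D_min(w₁) = w₁ ln(6(w₁-w₂)) + (1-w₁) ln(6(1-w₁-w₂)), where w₂ = w₂(w₁) = (2-√(12(w₁-1/2)²+1))/3 and p₀₀ = 1 - w₁ - w₂. -/

import Mathlib

noncomputable def w2fun (w₁ : ℝ) : ℝ := (2 - Real.sqrt (12 * (w₁ - 1 / 2) ^ 2 + 1)) / 3

noncomputable def Dmin (w₁ : ℝ) : ℝ :=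
  w₁ * Real.log (6 * (w₁ - w2fun w₁)) + (1 - w₁) * Real.log (6 * (1 - w₁ - w2fun w₁))

set_option maxHeartbeats 1000000 in
theorem stmt_13 (w₁ : ℝ) (hw : w₁ ∈ Set.Ioo (0 : ℝ) (1 / 2)) :
    (1 - (1 - w₁ - w2fun w₁)) * Real.log (6 / 5 * (1 - (1 - w₁ - w2fun w₁)))
      + (1 - w₁ - w2fun w₁) * Real.log (6 * (1 - w₁ - w2fun w₁)) ≤ Dmin w₁ := by
  obtain ⟨hw0, hw2⟩ := hw
  unfold Dmin w2fun
  set R := Real.sqrt (12 * (w₁ - 1 / 2) ^ 2 + 1) with hRdef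
  have hR0 : 0 ≤ R := Real.sqrt_nonneg _
  have hRsq : R ^ 2 = 3 * (1 - 2 * w₁) ^ 2 + 1 := by
    rw [hRdef, Real.sq_sqrt (by positivity)]; ring
  have hR1 : 1 ≤ R := by nlinarith [sq_nonneg (1 - 2 * w₁)]
  have h1R : (0:ℝ) < 1 + R := by linarith
  set x := 3 * (1 - 2 * w₁) / (1 + R) with hxdef
  have hx0 : 0 < x := div_pos (by linarith) h1R
  have hx1 : x < 1 := by
    rw [hxdef, div_lt_one h1R]
    nlinarith [mul_pos (show (0:ℝ) < 1 - 2 * w₁ by linarith) (show (0:ℝ) < 2 * w₁ by linarith)]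
  have hd0 : (0:ℝ) < 1 - x ^ 2 / 3 := by nlinarith
  have h1x : (0:ℝ) < 1 - x := by linarith
  have h1x' : (0:ℝ) < 1 + x := by linarith
  have h53 : (0:ℝ) < (5 + 3 * x) / 5 := by linarith
  have e2 : (w₁ - (2 - R) / 3) * (6 * (1 - x ^ 2 / 3)) = (1 - x) ^ 2 := by
    rw [hxdef]; field_simp
    linear_combination ((-3) + 6*R + 18*w₁) * hRsq
  have e1 : (w₁ + (2 - R) / 3) * (6 * (1 - x ^ 2 / 3)) = (1 - x) * (5 + 3 * x) := by
    rw [hxdef]; field_simp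
    linear_combination ((-15) - 6*R + 18*w₁) * hRsq
  have e3 : (2 * ((2 - R) / 3)) * (6 * (1 - x ^ 2 / 3)) = 4 * ((1 - x) * (1 + x)) := by
    rw [hxdef]; field_simp
    linear_combination ((-12) - 12*R) * hRsq
  have e4 : (1 - w₁ - (2 - R) / 3) * (6 * (1 - x ^ 2 / 3)) = (1 + x) ^ 2 := by
    rw [hxdef]; field_simp
    linear_combination (15 + 6*R - 18*w₁) * hRsq
  -- log rewrites
  have hlogA : Real.log (6 * (w₁ - (2 - R) / 3))
      = 2 * Real.log (1 - x) - Real.log (1 - x ^ 2 / 3) := by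
    rw [show 6 * (w₁ - (2 - R) / 3) = (1 - x) ^ 2 / (1 - x ^ 2 / 3) by
      rw [eq_div_iff hd0.ne']; linear_combination e2]
    rw [Real.log_div (by positivity) hd0.ne', Real.log_pow]
    push_cast; ring
  have hlogB : Real.log (6 * (1 - w₁ - (2 - R) / 3))
      = 2 * Real.log (1 + x) - Real.log (1 - x ^ 2 / 3) := by
    rw [show 6 * (1 - w₁ - (2 - R) / 3) = (1 + x) ^ 2 / (1 - x ^ 2 / 3) by
      rw [eq_div_iff hd0.ne']; linear_combination e4]
    rw [Real.log_div (by positivity) hd0.ne', Real.log_pow]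
    push_cast; ring
  have hlogC : Real.log (6 / 5 * (w₁ + (2 - R) / 3))
      = Real.log (1 - x) + Real.log ((5 + 3 * x) / 5) - Real.log (1 - x ^ 2 / 3) := by
    rw [show 6 / 5 * (w₁ + (2 - R) / 3) = ((1 - x) * ((5 + 3 * x) / 5)) / (1 - x ^ 2 / 3) by
      rw [eq_div_iff hd0.ne']; linear_combination (1/5 : ℝ) * e1]
    rw [Real.log_div (by positivity) hd0.ne', Real.log_mul h1x.ne' h53.ne']
  -- log-sum (convexity of t * log t)
  have hFineq : (5 + 3 * x) * Real.log ((5 + 3 * x) / 5)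
      ≤ (1 - x) * Real.log (1 - x) + 4 * (1 + x) * Real.log (1 + x) := by
    have hc := Real.convexOn_mul_log.2 (Set.mem_Ici.2 h1x.le) (Set.mem_Ici.2 h1x'.le)
      (by norm_num : (0:ℝ) ≤ 1/5) (by norm_num : (0:ℝ) ≤ 4/5) (by norm_num)
    simp only [smul_eq_mul] at hc
    rw [show (1:ℝ)/5 * (1 - x) + 4/5 * (1 + x) = (5 + 3 * x) / 5 by ring] at hc
    have h5 : ((5 + 3 * x) / 5) * Real.log ((5 + 3 * x) / 5)
        ≤ 1/5 * ((1 - x) * Real.log (1 - x)) + 4/5 * ((1 + x) * Real.log (1 + x)) := hc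
    linarith
  -- scale by (1-x)/(6*(1-x^2/3)) > 0
  have hc0 : 0 < (1 - x) / (6 * (1 - x ^ 2 / 3)) := by positivity
  have hscaled := mul_le_mul_of_nonneg_left hFineq hc0.le
  have hcore : (w₁ + (2 - R) / 3) * Real.log ((5 + 3 * x) / 5)
      ≤ (w₁ - (2 - R) / 3) * Real.log (1 - x) + 2 * ((2 - R) / 3) * Real.log (1 + x) := by
    have e1' : w₁ + (2 - R) / 3 = (1 - x) / (6 * (1 - x ^ 2 / 3)) * (5 + 3 * x) := by
      rw [div_mul_eq_mul_div, eq_div_iff (by positivity : (6 * (1 - x ^ 2 / 3)) ≠ 0)]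
      linear_combination e1
    have e2' : w₁ - (2 - R) / 3 = (1 - x) / (6 * (1 - x ^ 2 / 3)) * (1 - x) := by
      rw [div_mul_eq_mul_div, eq_div_iff (by positivity : (6 * (1 - x ^ 2 / 3)) ≠ 0)]
      linear_combination e2
    have e3' : 2 * ((2 - R) / 3) = (1 - x) / (6 * (1 - x ^ 2 / 3)) * (4 * (1 + x)) := by
      rw [div_mul_eq_mul_div, eq_div_iff (by positivity : (6 * (1 - x ^ 2 / 3)) ≠ 0)]
      linear_combination e3
    rw [e1', e2', e3']
    nlinarith [hscaled]
  rw [show 1 - (1 - w₁ - (2 - R) / 3) = w₁ + (2 - R) / 3 by ring]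
  rw [hlogA, hlogB, hlogC]
  nlinarith [hcore]
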